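/- Let ≽ be a total preorder on 𝒜 × ℝ and suppose there exist a* ∈ 𝒜 and z* ∈ ℝ such that: (1) ≽ is continuous in money, i.e., for all a, b ∈ 𝒜 the set {(z_a, z_b) ∈ ℝ² : (a, z_a) ≽ (b, z_b)} is closed in ℝ²; (2) for every x ∈ 𝒜 there exist z_x, ẑ_x ∈ ℝ with (x, z_x) ≺ (a*, z*) ≺ (x, ẑ_x); (3) for all x, y ∈ 𝒜 and z_x, z_y ∈ ℝ with (x, z_x) ≽ (y, z_y), it holds that (x, z_x − α) ≽ (y, z_y − α) for every α ∈ ℝ. Then ≽ is strictly monotone in money with a direction that is uniform across alternatives: either for every a ∈ 𝒜 and all z < z' one has (a, z) ≻ (a, z'), or for every a ∈ 𝒜 and all z < z' one has (a, z) ≺ (a, z'). -/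

import Mathlib

/-- The strict part of a preference: `p ≻ q`. -/
def StrictPref {𝒜 : Type*} (R : 𝒜 × ℝ → 𝒜 × ℝ → Prop) (p q : 𝒜 × ℝ) : Prop :=
  R p q ∧ ¬ R q p

theorem stmt16 {𝒜 : Type*} [Fintype 𝒜] [Nonempty 𝒜]
    (R : 𝒜 × ℝ → 𝒜 × ℝ → Prop)
    (hRrefl : Reflexive R) (hRtrans : Transitive R) (hRtotal : Total R)
    (astar : 𝒜) (zstar : ℝ)
    -- (1) continuity in money
    (hcont : ∀ a b : 𝒜, IsClosed {p : ℝ × ℝ | R (a, p.1) (b, p.2)})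
    -- (2) for every alternative, (a*, z*) is strictly in between
    (hbetween : ∀ x : 𝒜, ∃ zx zhat : ℝ,
      StrictPref R (astar, zstar) (x, zx) ∧ StrictPref R (x, zhat) (astar, zstar))
    -- (3) invariance under common shifts of the payments
    (hshift : ∀ (x y : 𝒜) (zx zy : ℝ), R (x, zx) (y, zy) →
      ∀ α : ℝ, R (x, zx - α) (y, zy - α)) :
    (∀ (a : 𝒜) (z z' : ℝ), z < z' → StrictPref R (a, z) (a, z')) ∨
    (∀ (a : 𝒜) (z z' : ℝ), z < z' → StrictPref R (a, z') (a, z)) := by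
  -- shift in both directions
  have hshift' : ∀ (x y : 𝒜) (zx zy α : ℝ), R (x, zx) (y, zy) → R (x, zx + α) (y, zy + α) := by
    intro x y zx zy α h
    simpa [sub_neg_eq_add] using hshift x y zx zy h (-α)
  set S : 𝒜 → Set ℝ := fun a => {t | R (a, t) (a, 0)} with hS
  set N : 𝒜 → Set ℝ := fun a => {t | R (a, 0) (a, t)} with hN
  -- basic facts
  have hSclosed : ∀ a, IsClosed (S a) := by
    intro a
    have : S a = (fun t : ℝ => ((t, (0:ℝ)) : ℝ × ℝ)) ⁻¹' {p : ℝ × ℝ | R (a, p.1) (a, p.2)} := rfl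
    rw [this]
    exact (hcont a a).preimage (by fun_prop)
  have hNclosed : ∀ a, IsClosed (N a) := by
    intro a
    have : N a = (fun t : ℝ => (((0:ℝ), t) : ℝ × ℝ)) ⁻¹' {p : ℝ × ℝ | R (a, p.1) (a, p.2)} := rfl
    rw [this]
    exact (hcont a a).preimage (by fun_prop)
  have hSN : ∀ a (t : ℝ), t ∈ S a ∨ t ∈ N a := fun a t => hRtotal (a, t) (a, 0)
  -- membership translations
  have hmemS : ∀ a (z z' : ℝ), R (a, z) (a, z') ↔ z - z' ∈ S a := by
    intro a z z'
    constructor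
    · intro h; exact (by simpa using hshift a a z z' h z' : R (a, z - z') (a, 0))
    · intro h
      have := hshift' a a (z - z') 0 z' h
      simpa using this
  have hSadd : ∀ a, ∀ s ∈ S a, ∀ t ∈ S a, s + t ∈ S a := by
    intro a s hs t ht
    have h1 : R (a, s + t) (a, t) := by simpa using hshift' a a s 0 t hs
    exact hRtrans h1 ht
  have hNadd : ∀ a, ∀ s ∈ N a, ∀ t ∈ N a, s + t ∈ N a := by
    intro a s hs t ht
    have h1 : R (a, t) (a, s + t) := by simpa [add_comm] using hshift' a a 0 s t hs
    exact hRtrans ht h1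
  have hSneg : ∀ a, ∀ t ∈ S a, -t ∈ N a := by
    intro a t ht
    exact (by simpa using hshift a a t 0 ht t : R (a, 0) (a, -t))
  have hNneg : ∀ a, ∀ t ∈ N a, -t ∈ S a := by
    intro a t ht
    exact (by simpa using hshift a a 0 t ht t : R (a, -t) (a, 0))
  -- the indifference subgroup
  have hG : ∀ a : 𝒜, ∃ G : AddSubgroup ℝ, (G : Set ℝ) = S a ∩ N a := by
    intro a
    refine ⟨{ carrier := S a ∩ N a,
              zero_mem' := ⟨hRrefl (a, 0), hRrefl (a, 0)⟩,
              add_mem' := ?_, neg_mem' := ?_ }, rfl⟩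
    · rintro x y ⟨hxS, hxN⟩ ⟨hyS, hyN⟩
      exact ⟨hSadd a x hxS y hyS, hNadd a x hxN y hyN⟩
    · rintro x ⟨hxS, hxN⟩
      exact ⟨hNneg a x hxN, hSneg a x hxS⟩
  -- G is trivial
  have hGtriv : ∀ a : 𝒜, S a ∩ N a = {0} := by
    intro a
    obtain ⟨G, hGeq⟩ := hG a
    -- first: G ≠ univ, from hbetween
    have hGne : (G : Set ℝ) ≠ Set.univ := by
      intro hu
      obtain ⟨zx, zhat, ⟨h1, h1'⟩, ⟨h2, h2'⟩⟩ := hbetween a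
      -- (a, zhat) ∼ (a, zx) since zhat - zx ∈ G ⊆ N... need R (a,zx) (a,zhat)
      have : zx - zhat ∈ S a := by
        have : zx - zhat ∈ (G : Set ℝ) := by rw [hu]; trivial
        exact (hGeq ▸ this).1
      have hR : R (a, zx) (a, zhat) := (hmemS a zx zhat).2 this
      exact h1' (hRtrans hR h2)
    rcases G.dense_or_cyclic with hd | ⟨c, hc⟩
    · exfalso
      apply hGne
      have := hd.closure_eq
      rwa [IsClosed.closure_eq (hGeq ▸ ((hSclosed a).inter (hNclosed a)))] at this
    · -- cyclic case
      by_cases hc0 : c = 0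
      · rw [← hGeq, hc, hc0]
        ext x
        simp [AddSubgroup.mem_closure_singleton]
        exact eq_comm
      · exfalso
        set c' := |c| with hc'
        have hc'pos : 0 < c' := abs_pos.2 hc0
        have hmemG : ∀ x : ℝ, x ∈ S a ∩ N a ↔ ∃ n : ℤ, n * c = x := by
          intro x
          rw [← hGeq, hc]
          simp [AddSubgroup.mem_closure_singleton, zsmul_eq_mul]
        have hnot : ∀ x : ℝ, 0 < x → x < c' → x ∉ S a ∩ N a := by
          intro x hx0 hxc hmem
          obtain ⟨n, hn⟩ := (hmemG x).1 hmem
          have : |(n:ℝ)| * c' = |x| := by rw [← abs_mul, hn]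
          rw [abs_of_pos hx0] at this
          rcases lt_trichotomy n 0 with h | h | h
          · have h1 : (1:ℝ) ≤ |(n:ℝ)| := by
              have h2 : (1:ℤ) ≤ |n| := Int.one_le_abs (by omega)
              exact_mod_cast h2
            nlinarith
          · simp [h] at hn; linarith
          · have h1 : (1:ℝ) ≤ |(n:ℝ)| := by
              have h2 : (1:ℤ) ≤ |n| := Int.one_le_abs (by omega)
              exact_mod_cast h2
            nlinarith
        -- c' ∈ G
        have hc'G : c' ∈ S a ∩ N a := by
          rw [hmemG]
          rcases abs_cases c with ⟨h, _⟩ | ⟨h, _⟩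
          · exact ⟨1, by simp [hc', h]⟩
          · exact ⟨-1, by simp [hc', h]⟩
        -- connectedness of Ioo 0 c'
        have hIoo := isPreconnected_Ioo (a := (0:ℝ)) (b := c')
        have hcov : Set.Ioo (0:ℝ) c' ⊆ S a ∪ N a := fun t _ => hSN a t
        have hkey : (Set.Ioo (0:ℝ) c' ∩ S a).Nonempty → (Set.Ioo (0:ℝ) c' ∩ N a).Nonempty → False := by
          intro h1 h2
          obtain ⟨x, ⟨hx1, hx2⟩, hxS, hxN⟩ :=
            isPreconnected_closed_iff.1 hIoo (S a) (N a) (hSclosed a) (hNclosed a) hcov h1 h2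
          exact hnot x hx1 hx2 ⟨hxS, hxN⟩
        have hhalf : c' / 2 ∈ Set.Ioo (0:ℝ) c' := ⟨by linarith, by linarith⟩
        -- in either case, derive c'/2 ∈ G
        have : c' / 2 ∈ S a ∩ N a := by
          by_cases hSE : (Set.Ioo (0:ℝ) c' ∩ S a).Nonempty
          · have hNE : ¬ (Set.Ioo (0:ℝ) c' ∩ N a).Nonempty := fun h => hkey hSE h
            have hsub : Set.Ioo (0:ℝ) c' ⊆ S a := by
              intro t ht
              rcases hSN a t with h | h
              · exact h
              · exact absurd ⟨t, ht, h⟩ hNE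
            have h1 : c' / 2 ∈ S a := hsub hhalf
            have h2 : -(c'/2) ∈ S a := by
              have := hSadd a (c'/2) h1 (-c') (hNneg a c' hc'G.2)
              have he : c'/2 + -c' = -(c'/2) := by ring
              rwa [he] at this
            exact ⟨h1, by simpa using hSneg a _ h2⟩
          · have hsub : Set.Ioo (0:ℝ) c' ⊆ N a := by
              intro t ht
              rcases hSN a t with h | h
              · exact absurd ⟨t, ht, h⟩ hSE
              · exact h
            have h1 : c' / 2 ∈ N a := hsub hhalf
            have h2 : -(c'/2) ∈ N a := by
              have := hNadd a (c'/2) h1 (-c') (by simpa using hSneg a c' hc'G.1)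
              have he : c'/2 + -c' = -(c'/2) := by ring
              rwa [he] at this
            exact ⟨by simpa using hNneg a _ h2, h1⟩
        exact hnot _ hhalf.1 hhalf.2 this
  -- direction per alternative: Pos a means positive amounts in S a
  have hdir : ∀ a : 𝒜, (Set.Ioi (0:ℝ) ⊆ S a) ∨ (Set.Ioi (0:ℝ) ⊆ N a) := by
    intro a
    by_cases hSE : (Set.Ioi (0:ℝ) ∩ S a).Nonempty
    · by_cases hNE : (Set.Ioi (0:ℝ) ∩ N a).Nonempty
      · exfalso
        obtain ⟨x, hx, hxS, hxN⟩ := isPreconnected_closed_iff.1 isPreconnected_Ioi (S a) (N a)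
          (hSclosed a) (hNclosed a) (fun t _ => hSN a t) hSE hNE
        have : x ∈ ({0} : Set ℝ) := hGtriv a ▸ (⟨hxS, hxN⟩ : x ∈ S a ∩ N a)
        simp at this
        exact absurd this (ne_of_gt hx)
      · left; intro t ht
        rcases hSN a t with h | h
        · exact h
        · exact absurd ⟨t, ht, h⟩ hNE
    · right; intro t ht
      rcases hSN a t with h | h
      · exact absurd ⟨t, ht, h⟩ hSE
      · exact h
  -- calibration: for each x there is z with (x,z) ∼ (astar, zstar)
  have hcalib : ∀ x : 𝒜, ∃ z : ℝ, R (x, z) (astar, zstar) ∧ R (astar, zstar) (x, z) := by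
    intro x
    obtain ⟨zx, zhat, ⟨h1, h1'⟩, ⟨h2, h2'⟩⟩ := hbetween x
    set A : Set ℝ := {z | R (x, z) (astar, zstar)} with hA
    set B : Set ℝ := {z | R (astar, zstar) (x, z)} with hB
    have hAclosed : IsClosed A := by
      have : A = (fun z : ℝ => ((z, zstar) : ℝ × ℝ)) ⁻¹' {p : ℝ × ℝ | R (x, p.1) (astar, p.2)} := rfl
      rw [this]; exact (hcont x astar).preimage (by fun_prop)
    have hBclosed : IsClosed B := by
      have : B = (fun z : ℝ => ((zstar, z) : ℝ × ℝ)) ⁻¹' {p : ℝ × ℝ | R (astar, p.1) (x, p.2)} := rfl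
      rw [this]; exact (hcont astar x).preimage (by fun_prop)
    have hcov : (Set.univ : Set ℝ) ⊆ A ∪ B := fun z _ => hRtotal (x, z) (astar, zstar)
    have := isPreconnected_closed_iff.1 isPreconnected_univ A B hAclosed hBclosed hcov
      ⟨zhat, trivial, h2⟩ ⟨zx, trivial, h1⟩
    obtain ⟨z, _, hzA, hzB⟩ := this
    exact ⟨z, hzA, hzB⟩
  -- uniformity
  have hstrictS : ∀ a : 𝒜, Set.Ioi (0:ℝ) ⊆ S a → ∀ t : ℝ, 0 < t → t ∈ S a ∧ t ∉ N a := by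
    intro a h t ht
    refine ⟨h ht, fun hN' => ?_⟩
    have : t ∈ ({0}:Set ℝ) := hGtriv a ▸ (⟨h ht, hN'⟩ : t ∈ S a ∩ N a)
    simp at this; exact absurd this (ne_of_gt ht)
  have hstrictN : ∀ a : 𝒜, Set.Ioi (0:ℝ) ⊆ N a → ∀ t : ℝ, 0 < t → t ∈ N a ∧ t ∉ S a := by
    intro a h t ht
    refine ⟨h ht, fun hS' => ?_⟩
    have : t ∈ ({0}:Set ℝ) := hGtriv a ▸ (⟨hS', h ht⟩ : t ∈ S a ∩ N a)
    simp at this; exact absurd this (ne_of_gt ht)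
  have huniform : ∀ a : 𝒜, (Set.Ioi (0:ℝ) ⊆ S astar → Set.Ioi (0:ℝ) ⊆ S a) ∧
      (Set.Ioi (0:ℝ) ⊆ N astar → Set.Ioi (0:ℝ) ⊆ N a) := by
    intro a
    obtain ⟨za, hza1, hza2⟩ := hcalib a
    constructor
    · intro hstar
      rcases hdir a with h | h
      · exact h
      · exfalso
        -- a is money-hating, astar money-loving
        -- R (a, za) (astar, zstar), R (astar, zstar) (astar, zstar - 1), R (astar, zstar -1) (a, za -1)
        have k1 : R (astar, zstar) (astar, zstar - 1) := by
          rw [hmemS]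
          simpa using hstar (by norm_num : (0:ℝ) < 1)
        have k2 : R (astar, zstar - 1) (a, za - 1) := hshift astar a zstar za hza2 1
        have k3 : R (a, za) (a, za - 1) := hRtrans hza1 (hRtrans k1 k2)
        rw [hmemS] at k3
        have : za - (za - 1) = 1 := by ring
        rw [this] at k3
        exact (hstrictN a h 1 (by norm_num)).2 k3
    · intro hstar
      rcases hdir a with h | h
      · exfalso
        have k1 : R (astar, zstar - 1) (astar, zstar) := by
          have : (1:ℝ) ∈ N astar := hstar (by norm_num : (0:ℝ) < 1)
          have := hshift' astar astar 0 1 (zstar - 1) this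
          simpa [sub_add_cancel] using this
        have k2 : R (a, za - 1) (astar, zstar - 1) := hshift a astar za zstar hza1 1
        have k3 : R (a, za - 1) (a, za) := hRtrans k2 (hRtrans k1 hza2)
        rw [hmemS] at k3
        have : za - 1 - za = -1 := by ring
        rw [this] at k3
        have : (1:ℝ) ∈ N a := by simpa using hSneg a _ k3
        exact (hstrictS a h 1 (by norm_num)).2 this
      · exact h
  -- conclude
  rcases hdir astar with hstar | hstar
  · right
    intro a z z' hzz'
    have ha := (huniform a).1 hstar
    have hpos : (0:ℝ) < z' - z := by linarith
    obtain ⟨h1, h2⟩ := hstrictS a ha (z' - z) hpos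
    constructor
    · rw [hmemS]; exact h1
    · rw [hmemS]
      intro hmem
      apply h2
      have := hSneg a _ hmem
      simpa [neg_sub] using this
  · left
    intro a z z' hzz'
    have ha := (huniform a).2 hstar
    have hpos : (0:ℝ) < z' - z := by linarith
    obtain ⟨h1, h2⟩ := hstrictN a ha (z' - z) hpos
    constructor
    · rw [hmemS]
      have := hNneg a _ h1
      simpa [neg_sub] using this
    · rw [hmemS]; exact h2
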